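/- arXiv:2404.05451 — 2 statements merged into one kernel-verified Lean document; each statement's English description precedes it below -/
import Mathlib

section
/- Let d ≥ 1, let γ ∈ ℝ^d have all coordinates γ_j > 0, and let α > 0. Then there exist constants C_1, C_2 > 0 (depending only on d, γ, α) such that for every integer l ≥ 2, C_1 · 2^{−αl} l^{d−1} ≤ Σ_{s ∈ ℕ^d, (s,γ) ≥ l} 2^{−α(s,γ)} ≤ C_2 · 2^{−αl} l^{d−1}. -/
open Finset

section Aux

variable {d : ℕ}

noncomputable def Tf (γ : Fin d → ℝ) (s : Fin d → ℕ) : ℝ := ∑ j, (s j : ℝ) * γ j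

noncomputable def Ff (γ : Fin d → ℝ) (α : ℝ) (s : Fin d → ℕ) : ℝ := (2:ℝ) ^ (-(α * Tf γ s))

def Aset (γ : Fin d → ℝ) (l : ℕ) : Set (Fin d → ℕ) :=
  {s | (∀ j, 1 ≤ s j) ∧ (l : ℝ) ≤ Tf γ s}

noncomputable def AmC (γ : Fin d → ℝ) : ℕ := ⌈∑ j, (γ j)⁻¹⌉₊ + 1

noncomputable def CxC (d : ℕ) (α : ℝ) : ℝ := ∑' k : ℕ, ((k:ℝ)+1)^(d-1) * ((2:ℝ)^(-α))^k

lemma Tf_nonneg (γ : Fin d → ℝ) (hγ : ∀ j, 0 < γ j) (s : Fin d → ℕ) : 0 ≤ Tf γ s :=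
  Finset.sum_nonneg fun j _ => mul_nonneg (Nat.cast_nonneg _) (hγ j).le

lemma single_le_Tf (γ : Fin d → ℝ) (hγ : ∀ j, 0 < γ j) (s : Fin d → ℕ) (j : Fin d) :
    (s j : ℝ) * γ j ≤ Tf γ s :=
  Finset.single_le_sum (f := fun i => (s i : ℝ) * γ i)
    (fun i _ => mul_nonneg (Nat.cast_nonneg _) (hγ i).le) (mem_univ j)

lemma xpow (α : ℝ) (n : ℕ) : ((2:ℝ)^(-α))^n = (2:ℝ)^(-(α * n)) := by
  rw [← Real.rpow_natCast ((2:ℝ)^(-α)) n, ← Real.rpow_mul (by norm_num : (0:ℝ) ≤ 2)]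
  ring_nf

lemma x_pos (α : ℝ) : 0 < (2:ℝ)^(-α) := Real.rpow_pos_of_pos two_pos _

lemma x_lt_one (α : ℝ) (hα : 0 < α) : (2:ℝ)^(-α) < 1 :=
  Real.rpow_lt_one_of_one_lt_of_neg one_lt_two (neg_neg_of_pos hα)

lemma summable_kpow (d : ℕ) (α : ℝ) (hα : 0 < α) :
    Summable (fun k : ℕ => ((k:ℝ)+1)^(d-1) * ((2:ℝ)^(-α))^k) := by
  set x := (2:ℝ)^(-α) with hxdef
  have hx0 : 0 < x := x_pos α
  have hx1 : x < 1 := x_lt_one α hα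
  have hxnorm : ‖x‖ < 1 := by rw [Real.norm_eq_abs, abs_of_pos hx0]; exact hx1
  have h1 : Summable (fun k : ℕ => (2:ℝ)^(d-1) * ((k:ℝ)^(d-1) * x^k) + (2:ℝ)^(d-1) * x^k) :=
    ((summable_pow_mul_geometric_of_norm_lt_one (d-1) hxnorm).mul_left _).add
      ((summable_geometric_of_norm_lt_one hxnorm).mul_left _)
  refine Summable.of_nonneg_of_le (fun k => by positivity) (fun k => ?_) h1
  have hb : ((k:ℝ)+1)^(d-1) ≤ (2:ℝ)^(d-1) * ((k:ℝ)^(d-1) + 1) := by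
    calc ((k:ℝ)+1)^(d-1) ≤ (2 * max (k:ℝ) 1)^(d-1) := by
          apply pow_le_pow_left₀ (by positivity)
          calc (k:ℝ)+1 ≤ max (k:ℝ) 1 + max (k:ℝ) 1 :=
                add_le_add (le_max_left _ _) (le_max_right _ _)
            _ = 2 * max (k:ℝ) 1 := by ring
      _ = (2:ℝ)^(d-1) * (max (k:ℝ) 1)^(d-1) := mul_pow _ _ _
      _ ≤ (2:ℝ)^(d-1) * ((k:ℝ)^(d-1)+1) := by
          apply mul_le_mul_of_nonneg_left _ (by positivity)
          rcases le_total (k:ℝ) 1 with h|h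
          · rw [max_eq_right h, one_pow]
            have : (0:ℝ) ≤ (k:ℝ)^(d-1) := by positivity
            linarith
          · rw [max_eq_left h]
            linarith [pow_nonneg (by linarith : (0:ℝ) ≤ (k:ℝ)) (d-1)]
  calc ((k:ℝ)+1)^(d-1) * x^k ≤ ((2:ℝ)^(d-1) * ((k:ℝ)^(d-1)+1)) * x^k :=
        mul_le_mul_of_nonneg_right hb (pow_nonneg hx0.le k)
    _ = (2:ℝ)^(d-1) * ((k:ℝ)^(d-1) * x^k) + (2:ℝ)^(d-1) * x^k := by ring

lemma CxC_pos (d : ℕ) (α : ℝ) (hα : 0 < α) : 0 < CxC d α := by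
  have hx0 := x_pos α
  exact Summable.tsum_pos (summable_kpow d α hα) (fun k => by positivity) 0 (by positivity)

lemma card_pi_ite (d : ℕ) (hd : 1 ≤ d) (lst : Fin d) (a b : ℕ) :
    (Fintype.piFinset fun j : Fin d =>
      if j = lst then Finset.range a else Finset.range b).card = a * b^(d-1) := by
  classical
  rw [Fintype.card_piFinset]
  rw [← Finset.mul_prod_erase Finset.univ _ (Finset.mem_univ lst)]
  congr 1
  · rw [if_pos rfl, Finset.card_range]
  · rw [Finset.prod_congr rfl (fun j hj => by
      rw [if_neg (Finset.ne_of_mem_erase hj), Finset.card_range]),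
      Finset.prod_const, Finset.card_erase_of_mem (mem_univ lst), Finset.card_univ,
      Fintype.card_fin]

lemma card_shell_le {d : ℕ} (hd : 1 ≤ d) (γ : Fin d → ℝ) (hγ : ∀ j, 0 < γ j)
    (lst : Fin d) (M : ℕ) (hM : (γ lst)⁻¹ ≤ (M : ℝ)) (K Rk : ℕ)
    (U : Finset (Fin d → ℕ))
    (hU : ∀ s ∈ U, (∀ j, s j < Rk) ∧ (K:ℝ) ≤ Tf γ s ∧ Tf γ s < (K:ℝ)+1) :
    U.card ≤ M * Rk^(d-1) := by
  classical
  set T' : (Fin d → ℕ) → ℝ := fun s => ∑ j ∈ Finset.univ.erase lst, (s j : ℝ) * γ j with hT'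
  set msel : (Fin d → ℕ) → ℕ := fun s => (⌈((K:ℝ) - T' s) / γ lst⌉).toNat with hmsel
  have hsplit : ∀ s : Fin d → ℕ, T' s + (s lst : ℝ) * γ lst = Tf γ s := fun s =>
    Finset.sum_erase_add _ _ (mem_univ lst)
  have hmle : ∀ s ∈ U, msel s ≤ s lst := by
    intro s hs
    rw [hmsel]
    simp only
    rw [Int.toNat_le, Int.ceil_le]
    push_cast
    rw [div_le_iff₀ (hγ lst)]
    have h1 := (hU s hs).2.1
    have h2 := hsplit s
    linarith
  have hoffγ : ∀ s ∈ U, ((s lst : ℝ) - (msel s : ℝ)) * γ lst < 1 := by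
    intro s hs
    obtain ⟨-, h2, h3⟩ := hU s hs
    have hsp := hsplit s
    rcases le_or_gt 0 ((K:ℝ) - T' s) with hc | hc
    · have hd0 : 0 ≤ ((K:ℝ) - T' s) / γ lst := div_nonneg hc (hγ lst).le
      have h0 : (0:ℤ) ≤ ⌈((K:ℝ) - T' s) / γ lst⌉ := Int.ceil_nonneg hd0
      have hcast : ((msel s : ℕ) : ℝ) = ((⌈((K:ℝ) - T' s) / γ lst⌉ : ℤ) : ℝ) := by
        rw [hmsel]; simp only
        exact_mod_cast congrArg (fun z : ℤ => (z:ℝ)) (Int.toNat_of_nonneg h0)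
      have hle : ((K:ℝ) - T' s) / γ lst ≤ (msel s : ℝ) := by
        rw [hcast]; exact Int.le_ceil _
      rw [div_le_iff₀ (hγ lst)] at hle
      nlinarith [hγ lst]
    · have hm0 : (0:ℝ) ≤ (msel s:ℝ) := Nat.cast_nonneg _
      nlinarith [hγ lst, mul_nonneg hm0 (hγ lst).le]
  have hoff : ∀ s ∈ U, s lst - msel s < M := by
    intro s hs
    have h1 := hoffγ s hs
    have h2 := hmle s hs
    have h3 : ((s lst - msel s : ℕ) : ℝ) < (M:ℝ) := by
      rw [Nat.cast_sub h2]
      have hγl := hγ lst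
      have h4 : (s lst : ℝ) - msel s < (γ lst)⁻¹ := by
        rw [inv_eq_one_div, lt_div_iff₀ hγl]
        linarith
      linarith
    exact_mod_cast h3
  have hcard := Finset.card_le_card_of_injOn
    (s := U)
    (t := Fintype.piFinset fun j : Fin d =>
      if j = lst then Finset.range M else Finset.range Rk)
    (fun s => Function.update s lst (s lst - msel s)) ?_ ?_
  · refine hcard.trans ?_
    have := card_pi_ite d hd lst M Rk
    rw [this]
  · intro s hs
    rw [Finset.mem_coe, Fintype.mem_piFinset]
    intro j
    by_cases hj : j = lst
    · subst hj
      simp only [Function.update_self, if_pos rfl]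
      rw [if_pos trivial, Finset.mem_range]
      exact hoff s hs
    · simp only [Function.update_of_ne hj, if_neg hj, Finset.mem_range]
      exact (hU s hs).1 j
  · intro s hs t ht h
    simp only [Finset.mem_coe] at hs ht
    have hagree : ∀ j, j ≠ lst → s j = t j := by
      intro j hj
      have := congrFun h j
      simpa only [Function.update_of_ne hj] using this
    have hT'eq : T' s = T' t := by
      rw [hT']
      exact Finset.sum_congr rfl fun j hj => by
        rw [hagree j (Finset.ne_of_mem_erase hj)]
    have hmeq : msel s = msel t := by rw [hmsel]; simp only [hT'eq]
    have hlsteq : s lst = t lst := by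
      have hl := congrFun h lst
      simp only [Function.update_self] at hl
      have h1 := hmle s hs
      have h2 := hmle t ht
      omega
    funext j
    by_cases hj : j = lst
    · rw [hj]; exact hlsteq
    · exact hagree j hj

lemma upper_bound (d : ℕ) (hd : 1 ≤ d) (γ : Fin d → ℝ) (hγ : ∀ j, 0 < γ j)
    (α : ℝ) (hα : 0 < α) (l : ℕ) (hl : 2 ≤ l) :
    Summable ((Aset γ l).indicator (Ff γ α)) ∧
    ∑' s, (Aset γ l).indicator (Ff γ α) s ≤
      ((AmC γ : ℝ)^d * 2^(d-1) * CxC d α) * (2:ℝ)^(-(α * l)) * (l:ℝ)^(d-1) := by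
  classical
  set x := (2:ℝ)^(-α) with hxdef
  have hx0 : 0 < x := x_pos α
  have hAm1 : 1 ≤ AmC γ := Nat.le_add_left 1 _
  have hAm0 : (0:ℝ) < (AmC γ : ℝ) := by exact_mod_cast hAm1
  have hAm : ∀ j, (γ j)⁻¹ ≤ (AmC γ : ℝ) := by
    intro j
    have h1 : (γ j)⁻¹ ≤ ∑ i, (γ i)⁻¹ :=
      Finset.single_le_sum (f := fun i => (γ i)⁻¹)
        (fun i _ => (inv_pos.mpr (hγ i)).le) (mem_univ j)
    have h2 : (∑ i, (γ i)⁻¹) ≤ (⌈∑ i, (γ i)⁻¹⌉₊ : ℝ) := Nat.le_ceil _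
    have h3 : ((AmC γ : ℕ) : ℝ) = (⌈∑ i, (γ i)⁻¹⌉₊ : ℝ) + 1 := by
      rw [AmC]; push_cast; ring
    linarith
  set lst : Fin d := ⟨d-1, by omega⟩ with hlst
  set shell : ℕ → Set (Fin d → ℕ) := fun k =>
    {s | (∀ j, 1 ≤ s j) ∧ ((l + k : ℕ) : ℝ) ≤ Tf γ s ∧ Tf γ s < ((l + k : ℕ) : ℝ) + 1}
    with hshell
  set g : ℕ × (Fin d → ℕ) → ℝ :=
    fun p => (shell p.1).indicator (fun _ => x ^ (l + p.1)) p.2 with hgdef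
  have hg0 : ∀ p, 0 ≤ g p :=
    fun p => Set.indicator_nonneg (fun s _ => pow_nonneg hx0.le _) _
  set ck : ℕ → ℝ := fun k =>
    ((AmC γ:ℝ)^d * ((l:ℝ)+2)^(d-1) * x^l) * (((k:ℝ)+1)^(d-1) * x^k) with hck
  have hck_summ : Summable ck := (summable_kpow d α hα).mul_left _
  have hsupp : ∀ k, ∀ s ∉ Fintype.piFinset
      (fun _ : Fin d => Finset.range ((l + k + 2) * AmC γ)), g (k, s) = 0 := by
    intro k s hs
    apply Set.indicator_of_notMem
    intro hmem
    apply hs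
    rw [Fintype.mem_piFinset]
    intro j
    rw [Finset.mem_range]
    obtain ⟨h1, h2, h3⟩ := hmem
    have hj : (s j : ℝ) * γ j ≤ Tf γ s := single_le_Tf γ hγ s j
    have hgj := hγ j
    have e1 : (1:ℝ) ≤ γ j * AmC γ := by
      have h5 := mul_le_mul_of_nonneg_left (hAm j) (hγ j).le
      rwa [mul_inv_cancel₀ (hγ j).ne'] at h5
    have e2 : (s j : ℝ) ≤ ((s j : ℝ) * γ j) * AmC γ := by
      nlinarith [(Nat.cast_nonneg (s j) : (0:ℝ) ≤ (s j : ℝ))]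
    have hcastlk : ((l+k:ℕ):ℝ) = (l:ℝ)+(k:ℝ) := by push_cast; ring
    have e4 : (s j : ℝ) < (((l + k + 2) * AmC γ : ℕ) : ℝ) := by
      have hc2 : (((l + k + 2) * AmC γ : ℕ) : ℝ) = ((l:ℝ)+(k:ℝ)+2) * (AmC γ : ℝ) := by
        push_cast; ring
      rw [hc2]
      nlinarith
    exact_mod_cast e4
  have hfiber_le : ∀ k, (∑' s, g (k, s)) ≤ ck k := by
    intro k
    rw [tsum_eq_sum (hsupp k)]
    have hsum1 : ∑ s ∈ Fintype.piFinset
        (fun _ : Fin d => Finset.range ((l + k + 2) * AmC γ)), g (k, s) =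
        ∑ s ∈ (Fintype.piFinset
          (fun _ : Fin d => Finset.range ((l + k + 2) * AmC γ))).filter
          (fun s => s ∈ shell k), x^(l+k) := by
      rw [Finset.sum_filter]
      apply Finset.sum_congr rfl
      intro s _
      by_cases hmem : s ∈ shell k
      · rw [if_pos hmem]; exact Set.indicator_of_mem hmem _
      · rw [if_neg hmem]; exact Set.indicator_of_notMem hmem _
    rw [hsum1, Finset.sum_const, nsmul_eq_mul]
    have hcard : ((Fintype.piFinset
        (fun _ : Fin d => Finset.range ((l + k + 2) * AmC γ))).filter
        (fun s => s ∈ shell k)).card ≤ AmC γ * ((l + k + 2) * AmC γ)^(d-1) := by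
      apply card_shell_le hd γ hγ lst (AmC γ) (hAm lst) (l+k) ((l + k + 2) * AmC γ)
      intro s hs
      rw [Finset.mem_filter] at hs
      obtain ⟨hsf, h1, h2, h3⟩ := hs
      refine ⟨fun j => ?_, h2, h3⟩
      have := (Fintype.mem_piFinset.mp hsf) j
      rwa [Finset.mem_range] at this
    have hd1 : d - 1 + 1 = d := by omega
    have hAmd : (AmC γ:ℝ) * (AmC γ:ℝ)^(d-1) = (AmC γ:ℝ)^d := by
      rw [← pow_succ', hd1]
    have hlk : ((l:ℝ)+(k:ℝ)+2)^(d-1) ≤ ((l:ℝ)+2)^(d-1) * ((k:ℝ)+1)^(d-1) := by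
      rw [← mul_pow]
      apply pow_le_pow_left₀ (by positivity)
      nlinarith [(Nat.cast_nonneg l : (0:ℝ) ≤ (l:ℝ)), (Nat.cast_nonneg k : (0:ℝ) ≤ (k:ℝ))]
    calc ((((Fintype.piFinset
        (fun _ : Fin d => Finset.range ((l + k + 2) * AmC γ))).filter
        (fun s => s ∈ shell k)).card : ℕ) : ℝ) * x^(l+k)
        ≤ ((AmC γ * ((l + k + 2) * AmC γ)^(d-1) : ℕ) : ℝ) * x^(l+k) := by
          apply mul_le_mul_of_nonneg_right _ (by positivity)
          exact_mod_cast hcard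
      _ = ((AmC γ:ℝ) * (AmC γ:ℝ)^(d-1)) * ((l:ℝ)+(k:ℝ)+2)^(d-1) * (x^l * x^k) := by
          rw [← pow_add]
          push_cast
          rw [mul_pow]
          ring
      _ = (AmC γ:ℝ)^d * ((l:ℝ)+(k:ℝ)+2)^(d-1) * (x^l * x^k) := by rw [hAmd]
      _ ≤ (AmC γ:ℝ)^d * (((l:ℝ)+2)^(d-1) * ((k:ℝ)+1)^(d-1)) * (x^l * x^k) := by
          apply mul_le_mul_of_nonneg_right _ (by positivity)
          apply mul_le_mul_of_nonneg_left hlk (by positivity)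
      _ = ck k := by rw [hck]; ring
  have hfib_summ : ∀ k, Summable fun s => g (k, s) :=
    fun k => summable_of_ne_finset_zero (hsupp k)
  have hfibsum_summ : Summable fun k => ∑' s, g (k, s) :=
    Summable.of_nonneg_of_le (fun k => tsum_nonneg fun s => hg0 (k, s)) hfiber_le hck_summ
  have hgsum : Summable g :=
    (summable_prod_of_nonneg (Pi.le_def.mpr hg0)).mpr ⟨hfib_summ, hfibsum_summ⟩
  set e : (Fin d → ℕ) → ℕ × (Fin d → ℕ) := fun s => (⌊Tf γ s⌋₊ - l, s) with hedef
  have hinj : Function.Injective e := by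
    intro a b h
    exact congrArg Prod.snd h
  have hcomp : ∀ s, (Aset γ l).indicator (Ff γ α) s ≤ g (e s) := by
    intro s
    by_cases hs : s ∈ Aset γ l
    · rw [Set.indicator_of_mem hs]
      obtain ⟨h1, h2⟩ := hs
      have hTnn := Tf_nonneg γ hγ s
      have hfl : l ≤ ⌊Tf γ s⌋₊ := Nat.le_floor h2
      have hkk : l + (⌊Tf γ s⌋₊ - l) = ⌊Tf γ s⌋₊ := by omega
      have hmem : s ∈ shell (⌊Tf γ s⌋₊ - l) := by
        refine ⟨h1, ?_, ?_⟩
        · rw [hkk]; exact Nat.floor_le hTnn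
        · rw [hkk]; exact Nat.lt_floor_add_one _
      have hgval : g (e s) = x ^ (l + (⌊Tf γ s⌋₊ - l)) := Set.indicator_of_mem hmem _
      rw [hgval, hxdef, xpow]
      apply Real.rpow_le_rpow_of_exponent_le one_le_two
      have hfle : ((l + (⌊Tf γ s⌋₊ - l) : ℕ):ℝ) ≤ Tf γ s := by
        rw [hkk]; exact_mod_cast Nat.floor_le hTnn
      nlinarith
    · rw [Set.indicator_of_notMem hs]; exact hg0 _
  have hind0 : ∀ s, 0 ≤ (Aset γ l).indicator (Ff γ α) s :=
    fun s => Set.indicator_nonneg (fun t _ => Real.rpow_nonneg (by norm_num) _) _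
  have hSsum : Summable ((Aset γ l).indicator (Ff γ α)) :=
    Summable.of_nonneg_of_le hind0 hcomp (hgsum.comp_injective hinj)
  refine ⟨hSsum, ?_⟩
  have h1 : ∑' s, (Aset γ l).indicator (Ff γ α) s ≤ ∑' p, g p :=
    Summable.tsum_le_tsum_of_inj e hinj (fun c _ => hg0 c) hcomp hSsum hgsum
  have h2 : ∑' p, g p = ∑' k, ∑' s, g (k, s) := Summable.tsum_prod' hgsum hfib_summ
  have h3 : (∑' k, ∑' s, g (k, s)) ≤ ∑' k, ck k := Summable.tsum_le_tsum hfiber_le hfibsum_summ hck_summ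
  have hCx : (∑' k : ℕ, ((k:ℝ)+1)^(d-1) * x^k) = CxC d α := by rw [hxdef]; rfl
  have h4 : (∑' k, ck k) = ((AmC γ:ℝ)^d * ((l:ℝ)+2)^(d-1) * x^l) * CxC d α := by
    rw [hck, tsum_mul_left, hCx]
  have hCxnn : 0 ≤ CxC d α := (CxC_pos d α hα).le
  have hxl : x^l = (2:ℝ)^(-(α * (l:ℝ))) := by rw [hxdef, xpow]
  have hl2 : ((l:ℝ)+2)^(d-1) ≤ 2^(d-1) * (l:ℝ)^(d-1) := by
    rw [← mul_pow]
    apply pow_le_pow_left₀ (by positivity)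
    have : (2:ℝ) ≤ (l:ℝ) := by exact_mod_cast hl
    linarith
  calc ∑' s, (Aset γ l).indicator (Ff γ α) s
      ≤ ∑' p, g p := h1
    _ = ∑' k, ∑' s, g (k, s) := h2
    _ ≤ ∑' k, ck k := h3
    _ = ((AmC γ:ℝ)^d * ((l:ℝ)+2)^(d-1) * x^l) * CxC d α := h4
    _ ≤ ((AmC γ:ℝ)^d * (2^(d-1) * (l:ℝ)^(d-1)) * x^l) * CxC d α := by
        apply mul_le_mul_of_nonneg_right _ hCxnn
        apply mul_le_mul_of_nonneg_right _ (by positivity)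
        apply mul_le_mul_of_nonneg_left hl2 (by positivity)
    _ = ((AmC γ : ℝ)^d * 2^(d-1) * CxC d α) * x^l * (l:ℝ)^(d-1) := by ring
    _ = ((AmC γ : ℝ)^d * 2^(d-1) * CxC d α) * (2:ℝ)^(-(α * l)) * (l:ℝ)^(d-1) := by
        rw [hxl]


lemma lower_bound (d : ℕ) (hd : 1 ≤ d) (γ : Fin d → ℝ) (hγ : ∀ j, 0 < γ j)
    (α : ℝ) (hα : 0 < α) (l : ℕ) (hl : 2 ≤ l)
    (hS : Summable ((Aset γ l).indicator (Ff γ α))) :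
    (((2 * ∑ j, γ j)^(d-1))⁻¹ * (2:ℝ)^(-(α * (3 * ∑ j, γ j)))) * (2:ℝ)^(-(α * l)) * (l:ℝ)^(d-1)
      ≤ ∑' s, (Aset γ l).indicator (Ff γ α) s := by
  classical
  set lst : Fin d := ⟨d-1, by omega⟩ with hlst
  set G := ∑ j, γ j with hGdef
  have hG : 0 < G := Finset.sum_pos (fun j _ => hγ j) ⟨lst, mem_univ lst⟩
  have hγG : γ lst ≤ G :=
    Finset.single_le_sum (f := fun j => γ j) (fun j _ => (hγ j).le) (mem_univ lst)
  set m : ℕ := ⌈(l:ℝ)/(2*G)⌉₊ with hmdef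
  have hl0 : (0:ℝ) < (l:ℝ) := by exact_mod_cast (by omega : 0 < l)
  have h2G : (0:ℝ) < 2*G := by linarith
  have hm1 : 1 ≤ m := Nat.ceil_pos.mpr (div_pos hl0 h2G)
  have hml : (l:ℝ)/(2*G) ≤ (m:ℝ) := Nat.le_ceil _
  have hmu : (m:ℝ) ≤ (l:ℝ)/(2*G) + 1 := (Nat.ceil_lt_add_one (div_pos hl0 h2G).le).le
  set T'' : (Fin d → ℕ) → ℝ := fun t => ∑ j ∈ univ.erase lst, ((t j : ℝ) + 1) * γ j with hT''
  set Nt : (Fin d → ℕ) → ℕ := fun t => ⌈((l:ℝ) - T'' t)/γ lst⌉₊ + 1 with hNt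
  set σ : (Fin d → ℕ) → (Fin d → ℕ) := fun t j => if j = lst then Nt t else t j + 1 with hσ
  have hTσ : ∀ t, Tf γ (σ t) = T'' t + (Nt t : ℝ) * γ lst := by
    intro t
    rw [show Tf γ (σ t) = ∑ j, ((σ t j : ℝ)) * γ j from rfl]
    rw [← Finset.sum_erase_add _ _ (mem_univ lst)]
    congr 1
    · apply Finset.sum_congr rfl
      intro j hj
      have : σ t j = t j + 1 := by
        simp only [hσ, if_neg (Finset.ne_of_mem_erase hj)]
      rw [this]; push_cast; ring
    · have : σ t lst = Nt t := by simp only [hσ, if_pos rfl]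
      rw [this]
  have hσmem : ∀ t, σ t ∈ Aset γ l := by
    intro t
    constructor
    · intro j
      by_cases hj : j = lst
      · show 1 ≤ σ t j
        simp only [hσ, if_pos hj]
        exact Nat.le_add_left 1 _
      · show 1 ≤ σ t j
        simp only [hσ, if_neg hj]
        omega
    · show (l:ℝ) ≤ Tf γ (σ t)
      rw [hTσ]
      have h1 : ((l:ℝ) - T'' t)/γ lst ≤ (Nt t : ℝ) := by
        have h2 := Nat.le_ceil (((l:ℝ) - T'' t)/γ lst)
        have h3 : ((Nt t : ℕ):ℝ) = (⌈((l:ℝ) - T'' t)/γ lst⌉₊ : ℝ) + 1 := by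
          rw [hNt]; push_cast; ring
        linarith
      rw [div_le_iff₀ (hγ lst)] at h1
      linarith
  set D : Finset (Fin d → ℕ) :=
    Fintype.piFinset (fun j => if j = lst then Finset.range 1 else Finset.range m) with hD
  have hDcard : D.card = m^(d-1) := by
    rw [hD, card_pi_ite d hd lst 1 m, one_mul]
  have hTup : ∀ t ∈ D, Tf γ (σ t) ≤ (l:ℝ) + 3*G := by
    intro t ht
    rw [hD, Fintype.mem_piFinset] at ht
    have hT''le : T'' t ≤ (m:ℝ) * G := by
      calc T'' t ≤ ∑ j ∈ univ.erase lst, (m:ℝ) * γ j := by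
            apply Finset.sum_le_sum
            intro j hj
            have hjm := ht j
            rw [if_neg (Finset.ne_of_mem_erase hj), Finset.mem_range] at hjm
            have h5 : (t j : ℝ) + 1 ≤ (m:ℝ) := by exact_mod_cast Nat.succ_le_of_lt hjm
            exact mul_le_mul_of_nonneg_right h5 (hγ j).le
        _ ≤ ∑ j, (m:ℝ) * γ j := by
            apply Finset.sum_le_sum_of_subset_of_nonneg (Finset.erase_subset _ _)
            intro j _ _
            exact mul_nonneg (Nat.cast_nonneg m) (hγ j).le
        _ = (m:ℝ) * G := by rw [← Finset.mul_sum]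
    have hNtle : (Nt t : ℝ) * γ lst ≤ max 0 ((l:ℝ) - T'' t) + 2 * γ lst := by
      have h3 : ((Nt t : ℕ):ℝ) = (⌈((l:ℝ) - T'' t)/γ lst⌉₊ : ℝ) + 1 := by
        rw [hNt]; push_cast; ring
      set y := ((l:ℝ) - T'' t)/γ lst with hy
      have hyγ : y * γ lst = (l:ℝ) - T'' t := div_mul_cancel₀ _ (hγ lst).ne'
      rcases le_or_gt y 0 with hy0 | hy0
      · have hc0 : ⌈y⌉₊ = 0 := Nat.ceil_eq_zero.mpr hy0
        rw [h3, hc0]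
        push_cast
        have := le_max_left (0:ℝ) ((l:ℝ) - T'' t)
        nlinarith [hγ lst]
      · have h2 : (⌈y⌉₊:ℝ) < y + 1 := Nat.ceil_lt_add_one hy0.le
        have h3' : (l:ℝ) - T'' t ≤ max 0 ((l:ℝ) - T'' t) := le_max_right _ _
        nlinarith [hγ lst]
    have hGne : G ≠ 0 := hG.ne'
    have hq : (l:ℝ)/(2*G)*G = (l:ℝ)/2 := by
      field_simp
    have hmG : (m:ℝ)*G ≤ (l:ℝ)/2 + G := by
      calc (m:ℝ)*G ≤ ((l:ℝ)/(2*G) + 1) * G := mul_le_mul_of_nonneg_right hmu hG.le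
        _ = (l:ℝ)/2 + G := by rw [add_mul, one_mul, hq]
    rw [hTσ]
    rcases le_or_gt ((l:ℝ) - T'' t) 0 with hc | hc
    · rw [max_eq_left hc] at hNtle
      nlinarith [hγ lst]
    · rw [max_eq_right hc.le] at hNtle
      nlinarith [hγ lst]
  have hinjD : Set.InjOn σ D := by
    intro s hs t ht h
    simp only [Finset.mem_coe, hD, Fintype.mem_piFinset] at hs ht
    have h0 : ∀ j, j ≠ lst → s j = t j := by
      intro j hj
      have hcf := congrFun h j
      simp only [hσ, if_neg hj] at hcf
      omega
    funext j
    by_cases hj : j = lst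
    · subst hj
      have h1 := hs lst
      have h2 := ht lst
      rw [if_pos rfl, Finset.mem_range] at h1 h2
      omega
    · exact h0 j hj
  have hFlb : ∀ t ∈ D, (2:ℝ)^(-(α * ((l:ℝ) + 3*G))) ≤ Ff γ α (σ t) := by
    intro t ht
    apply Real.rpow_le_rpow_of_exponent_le one_le_two
    have := hTup t ht
    nlinarith
  have hind0 : ∀ s, 0 ≤ (Aset γ l).indicator (Ff γ α) s :=
    fun s => Set.indicator_nonneg (fun u _ => Real.rpow_nonneg (by norm_num) _) _
  have hsum1 : (D.card : ℝ) * (2:ℝ)^(-(α * ((l:ℝ) + 3*G)))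
      ≤ ∑ s ∈ D.image σ, (Aset γ l).indicator (Ff γ α) s := by
    rw [Finset.sum_image hinjD]
    calc (D.card : ℝ) * (2:ℝ)^(-(α * ((l:ℝ) + 3*G)))
        = ∑ _t ∈ D, (2:ℝ)^(-(α * ((l:ℝ) + 3*G))) := by
          rw [Finset.sum_const, nsmul_eq_mul]
      _ ≤ ∑ t ∈ D, (Aset γ l).indicator (Ff γ α) (σ t) := by
          apply Finset.sum_le_sum
          intro t ht
          rw [Set.indicator_of_mem (hσmem t)]
          exact hFlb t ht
  have hsum2 : (∑ s ∈ D.image σ, (Aset γ l).indicator (Ff γ α) s)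
      ≤ ∑' s, (Aset γ l).indicator (Ff γ α) s :=
    Summable.sum_le_tsum _ (fun s _ => hind0 s) hS
  have hmpow : ((l:ℝ)/(2*G))^(d-1) ≤ ((D.card : ℕ):ℝ) := by
    rw [hDcard]
    push_cast
    exact pow_le_pow_left₀ (by positivity) hml _
  have hsplit2 : (2:ℝ)^(-(α * ((l:ℝ) + 3*G))) =
      (2:ℝ)^(-(α * (3*G))) * (2:ℝ)^(-(α * (l:ℝ))) := by
    rw [← Real.rpow_add two_pos]
    congr 1
    ring
  have hd2 : ((l:ℝ)/(2*G))^(d-1) = (l:ℝ)^(d-1) * ((2*G)^(d-1))⁻¹ := by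
    rw [div_pow, div_eq_mul_inv]
  calc (((2*G)^(d-1))⁻¹ * (2:ℝ)^(-(α * (3*G)))) * (2:ℝ)^(-(α * l)) * (l:ℝ)^(d-1)
      = ((l:ℝ)/(2*G))^(d-1) * (2:ℝ)^(-(α * ((l:ℝ) + 3*G))) := by
        rw [hd2, hsplit2]; ring
    _ ≤ ((D.card : ℕ):ℝ) * (2:ℝ)^(-(α * ((l:ℝ) + 3*G))) := by
        apply mul_le_mul_of_nonneg_right hmpow (by positivity)
    _ ≤ ∑ s ∈ D.image σ, (Aset γ l).indicator (Ff γ α) s := hsum1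
    _ ≤ ∑' s, (Aset γ l).indicator (Ff γ α) s := hsum2

/-- **Lemma A, part 1.** For `γ ∈ ℝ^d` with positive coordinates and `α > 0`, there are
constants `C₁, C₂ > 0` such that for all integers `l ≥ 2`,
`C₁ · 2^{-αl} l^{d-1} ≤ Σ_{s ∈ ℕ^d, (s,γ) ≥ l} 2^{-α(s,γ)} ≤ C₂ · 2^{-αl} l^{d-1}`. -/
theorem statement0 (d : ℕ) (hd : 1 ≤ d) (γ : Fin d → ℝ) (hγ : ∀ j, 0 < γ j)
    (α : ℝ) (hα : 0 < α) :
    ∃ C₁ C₂ : ℝ, 0 < C₁ ∧ 0 < C₂ ∧ ∀ l : ℕ, 2 ≤ l →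
      C₁ * (2 : ℝ) ^ (-(α * (l : ℝ))) * (l : ℝ) ^ (d - 1) ≤
        (∑' s : {s : Fin d → ℕ // (∀ j, 1 ≤ s j) ∧ (l : ℝ) ≤ ∑ j, (s j : ℝ) * γ j},
          (2 : ℝ) ^ (-(α * ∑ j, (s.1 j : ℝ) * γ j))) ∧
      (∑' s : {s : Fin d → ℕ // (∀ j, 1 ≤ s j) ∧ (l : ℝ) ≤ ∑ j, (s j : ℝ) * γ j},
          (2 : ℝ) ^ (-(α * ∑ j, (s.1 j : ℝ) * γ j))) ≤
        C₂ * (2 : ℝ) ^ (-(α * (l : ℝ))) * (l : ℝ) ^ (d - 1) := by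
  classical
  refine ⟨((2 * ∑ j, γ j)^(d-1))⁻¹ * (2:ℝ)^(-(α * (3 * ∑ j, γ j))),
          (AmC γ : ℝ)^d * 2^(d-1) * CxC d α, ?_, ?_, ?_⟩
  · have hG : 0 < ∑ j, γ j :=
      Finset.sum_pos (fun j _ => hγ j) ⟨⟨0, by omega⟩, Finset.mem_univ _⟩
    have h1 : (0:ℝ) < (2 * ∑ j, γ j)^(d-1) := by positivity
    have h2 := Real.rpow_pos_of_pos two_pos (-(α * (3 * ∑ j, γ j)))
    positivity
  · have hAm1 : 1 ≤ AmC γ := Nat.le_add_left 1 _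
    have h1 : (0:ℝ) < (AmC γ : ℝ) := by exact_mod_cast hAm1
    have h2 := CxC_pos d α hα
    positivity
  · intro l hl
    obtain ⟨hsumm, hup⟩ := upper_bound d hd γ hγ α hα l hl
    have hlo := lower_bound d hd γ hγ α hα l hl hsumm
    have heq : (∑' s : {s : Fin d → ℕ // (∀ j, 1 ≤ s j) ∧ (l : ℝ) ≤ ∑ j, (s j : ℝ) * γ j},
        (2 : ℝ) ^ (-(α * ∑ j, (s.1 j : ℝ) * γ j))) = ∑' s, (Aset γ l).indicator (Ff γ α) s :=
      tsum_subtype (Aset γ l) (Ff γ α)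
    rw [heq]
    exact ⟨hlo, hup⟩
end Aux
end

section
/- Let d ≥ 1, let γ ∈ ℝ^d satisfy γ_1 = … = γ_ν = 1 and γ_j > 1 for j = ν+1,…,d (1 ≤ ν ≤ d), and let γ' ∈ ℝ^d satisfy γ'_j = 1 for j = 1,…,ν and 1 < γ'_j < γ_j for j = ν+1,…,d. Then for every α > 0 there exist constants C_1, C_2 > 0 (depending only on d, γ, γ', α) such that for every integer l ≥ 2, C_1 · 2^{−αl} l^{ν−1} ≤ Σ_{s ∈ ℕ^d, (s,γ') ≥ l} 2^{−α(s,γ)} ≤ C_2 · 2^{−αl} l^{ν−1}. -/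
open ENNReal NNReal Function


lemma tsum_le_tsum_of_inj' {α β : Type*} (i : α → β) (hi : Function.Injective i)
    (f : α → ℝ≥0∞) (g : β → ℝ≥0∞) (h : ∀ a, f a ≤ g (i a)) :
    ∑' a, f a ≤ ∑' b, g b :=
  le_trans (ENNReal.tsum_le_tsum h) (tsum_comp_le_tsum_of_injective hi g)

lemma box_count {p : ℕ} (S : Fin p → Finset ℕ) (c : ℝ≥0∞) :
    ∑' u : Fin p → ℕ, (if (∀ j, u j ∈ S j) then c else 0)
      = (∏ j, ((S j).card : ℝ≥0∞)) * c := by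
  rw [tsum_eq_sum (s := Fintype.piFinset S)
    (by intro b hb; rw [if_neg]; simpa [Fintype.mem_piFinset] using hb)]
  rw [Finset.sum_congr rfl (fun u hu => if_pos (by simpa [Fintype.mem_piFinset] using hu))]
  rw [Finset.sum_const, Fintype.card_piFinset, nsmul_eq_mul, Nat.cast_prod]

-- 2^r is finite
lemma two_rpow_ne_top (r : ℝ) : (2:ℝ≥0∞) ^ r ≠ ⊤ := by
  simp [ENNReal.rpow_eq_top_iff]

lemma two_rpow_ne_zero (r : ℝ) : (2:ℝ≥0∞) ^ r ≠ 0 := by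
  simp [ENNReal.rpow_eq_zero_iff]

set_option maxHeartbeats 1000000 in

lemma lemU (p : ℕ) (x : ℝ≥0∞) (hx0 : x ≠ 0) (hx1 : x < 1) :
    ∃ K : ℝ≥0∞, K ≠ ⊤ ∧ ∀ c : ℝ,
      ∑' m : ℕ, (if c ≤ (m:ℝ) then (m:ℝ≥0∞)^p * x ^ (m:ℝ) else 0)
        ≤ K * x ^ c * (ENNReal.ofReal (max c 1)) ^ p := by
  have hxt : x ≠ ⊤ := hx1.ne_top
  refine ⟨∑' i : ℕ, ((i:ℝ≥0∞)+2)^p * x ^ (i:ℝ), ?_, ?_⟩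
  · -- finiteness
    lift x to NNReal using hxt with r hr
    have hr1 : r < 1 := by exact_mod_cast hx1
    have hr0 : r ≠ 0 := by exact_mod_cast hx0
    have hrne : (r:ℝ) ≠ 0 := by exact_mod_cast hr0
    have hnorm : ‖(r:ℝ)‖ < 1 := by
      rw [Real.norm_eq_abs, abs_of_nonneg r.coe_nonneg]
      exact_mod_cast hr1
    have S1 : Summable fun n : ℕ => ((n:ℝ))^p * (r:ℝ)^n :=
      summable_pow_mul_geometric_of_norm_lt_one p hnorm
    have S2 : Summable fun n : ℕ => (((n+2:ℕ)):ℝ)^p * (r:ℝ)^(n+2) := ((_root_.summable_nat_add_iff 2).mpr S1 : _)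
    have S3 : Summable fun n : ℕ => ((n:ℝ)+2)^p * (r:ℝ)^n := by
      have h := S2.mul_left (((r:ℝ))⁻¹^2)
      refine h.congr fun n => ?_
      push_cast
      field_simp
      ring
    have S4 : Summable fun n : ℕ => ((n:ℝ≥0)+2)^p * r^n := by
      rw [← NNReal.summable_coe]
      refine S3.congr fun n => ?_
      push_cast
      ring
    have hco : ∀ i : ℕ, ((i:ℝ≥0∞)+2)^p * (r:ℝ≥0∞) ^ (i:ℝ)
        = ((((i:ℝ≥0)+2)^p * r^i : ℝ≥0) : ℝ≥0∞) := by
      intro i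
      rw [ENNReal.rpow_natCast]
      push_cast
      ring
    calc ∑' i : ℕ, ((i:ℝ≥0∞)+2)^p * (r:ℝ≥0∞) ^ (i:ℝ)
        = ∑' i : ℕ, ((((i:ℝ≥0)+2)^p * r^i : ℝ≥0) : ℝ≥0∞) := by
          exact tsum_congr hco
      _ ≠ ⊤ := ENNReal.tsum_coe_ne_top_iff_summable.mpr S4
  · intro c
    set N := ⌈c⌉₊ with hN
    have hinj : Function.Injective (fun i : ℕ => i + N) := add_left_injective N
    have hrange : Function.support (fun m : ℕ => if c ≤ (m:ℝ) then (m:ℝ≥0∞)^p * x ^ (m:ℝ) else 0)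
        ⊆ Set.range (fun i : ℕ => i + N) := by
      intro m hm
      simp only [Function.mem_support] at hm
      have hcm : c ≤ (m:ℝ) := by by_contra h; simp [h] at hm
      have hNm : N ≤ m := Nat.ceil_le.mpr hcm
      exact ⟨m - N, show m - N + N = m by omega⟩
    rw [← Function.Injective.tsum_eq hinj hrange]
    have hmax1 : (1:ℝ) ≤ max c 1 := le_max_right c 1
    have key : ∀ i : ℕ, (if c ≤ ((i+N:ℕ):ℝ) then ((i+N:ℕ):ℝ≥0∞)^p * x ^ ((i+N:ℕ):ℝ) else 0)
        ≤ (((i:ℝ≥0∞)+2)^p * x ^ (i:ℝ)) * (x ^ c * ENNReal.ofReal (max c 1) ^ p) := by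
      intro i
      split
      · have hNr : (N:ℝ) ≤ max c 1 + 1 := by
          rcases le_or_gt c 0 with h | h
          · have : N = 0 := by rw [hN]; exact Nat.ceil_eq_zero.mpr h
            rw [this]; push_cast; linarith
          · have := Nat.ceil_lt_add_one h.le
            have hc : c ≤ max c 1 := le_max_left c 1
            rw [hN]; linarith
        have hreal : ((i+N:ℕ):ℝ) ≤ ((i:ℝ)+2) * max c 1 := by
          push_cast; nlinarith
        have hA : ((i+N:ℕ):ℝ≥0∞) ≤ ((i:ℝ≥0∞)+2) * ENNReal.ofReal (max c 1) := by
          calc ((i+N:ℕ):ℝ≥0∞) = ENNReal.ofReal ((i+N:ℕ):ℝ) := (ENNReal.ofReal_natCast _).symm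
            _ ≤ ENNReal.ofReal (((i:ℝ)+2) * max c 1) := ENNReal.ofReal_le_ofReal hreal
            _ = ENNReal.ofReal ((i:ℝ)+2) * ENNReal.ofReal (max c 1) :=
                ENNReal.ofReal_mul (by positivity)
            _ = ((i:ℝ≥0∞)+2) * ENNReal.ofReal (max c 1) := by
                congr 1
                rw [ENNReal.ofReal_add (by positivity) (by norm_num),
                  ENNReal.ofReal_natCast, ENNReal.ofReal_ofNat]
        have hApow : ((i+N:ℕ):ℝ≥0∞)^p ≤ (((i:ℝ≥0∞)+2) * ENNReal.ofReal (max c 1))^p :=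
          pow_le_pow_left' hA p
        have hB : x ^ ((i+N:ℕ):ℝ) = x ^ (i:ℝ) * x ^ (N:ℝ) := by
          push_cast
          exact ENNReal.rpow_add _ _ hx0 hxt
        have hB2 : x ^ (N:ℝ) ≤ x ^ c := rpow_le_rpow_of_exponent_ge hx1.le (Nat.le_ceil c)
        calc ((i+N:ℕ):ℝ≥0∞)^p * x ^ ((i+N:ℕ):ℝ)
            ≤ (((i:ℝ≥0∞)+2) * ENNReal.ofReal (max c 1))^p * (x ^ (i:ℝ) * x ^ c) := by
              refine mul_le_mul' hApow ?_
              rw [hB]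
              exact mul_le_mul_right hB2 _
          _ = (((i:ℝ≥0∞)+2)^p * x ^ (i:ℝ)) * (x ^ c * ENNReal.ofReal (max c 1) ^ p) := by
              rw [mul_pow]; ring
      · exact zero_le
    calc ∑' i : ℕ, (if c ≤ ((i+N:ℕ):ℝ) then ((i+N:ℕ):ℝ≥0∞)^p * x ^ ((i+N:ℕ):ℝ) else 0)
        ≤ ∑' i : ℕ, (((i:ℝ≥0∞)+2)^p * x ^ (i:ℝ)) * (x ^ c * ENNReal.ofReal (max c 1) ^ p) :=
          ENNReal.tsum_le_tsum key
      _ = (∑' i : ℕ, ((i:ℝ≥0∞)+2)^p * x ^ (i:ℝ)) * x ^ c * ENNReal.ofReal (max c 1) ^ p := by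
          rw [ENNReal.tsum_mul_right, mul_assoc]


lemma tailLem (k : ℕ) (δ : Fin k → ℝ) (hδ : ∀ b, 0 < δ b)
    (x : ℝ≥0∞) (hx0 : x ≠ 0) (hx1 : x < 1) :
    ∃ K : ℝ≥0∞, K ≠ ⊤ ∧
      ∑' t : Fin k → ℕ, (if (∀ b, 1 ≤ t b) then x ^ (∑ b, (t b:ℝ) * δ b) else 0) ≤ K := by
  have hxt : x ≠ ⊤ := hx1.ne_top
  rcases Nat.eq_zero_or_pos k with hk | hk
  · subst hk
    refine ⟨1, one_ne_top, ?_⟩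
    have hu : ∀ t : Fin 0 → ℕ, t = (fun b => Fin.elim0 b) := by
      intro t; funext b; exact Fin.elim0 b
    rw [tsum_eq_single (fun b => Fin.elim0 b) (by intro t ht; exact absurd (hu t) ht)]
    simp
  · -- k ≥ 1
    have hne : (Finset.univ : Finset (Fin k)).Nonempty := ⟨⟨0, hk⟩, Finset.mem_univ _⟩
    set δ₀ := Finset.univ.inf' hne δ with hδ₀
    have hδ₀pos : 0 < δ₀ := by
      rw [hδ₀, Finset.lt_inf'_iff]
      exact fun b _ => hδ b
    have hδ₀le : ∀ b, δ₀ ≤ δ b := fun b => Finset.inf'_le δ (Finset.mem_univ b)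
    set y := x ^ δ₀ with hy
    have hy0 : y ≠ 0 := by
      rw [hy]; simp [ENNReal.rpow_eq_zero_iff, hx0, hxt]
    have hy1 : y < 1 := by
      rw [hy]
      exact ENNReal.rpow_lt_one hx1 hδ₀pos
    obtain ⟨K, hKt, hK⟩ := lemU (k-1) y hy0 hy1
    refine ⟨K, hKt, ?_⟩
    set z : Fin k := ⟨0, hk⟩ with hz
    -- the injection
    set i : (Fin k → ℕ) → ℕ × (Fin k → ℕ) :=
      fun t => (∑ b, t b, fun b => if b = z then 1 else t b) with hi
    have hinj : Function.Injective i := by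
      intro t t' h
      rw [hi, Prod.mk.injEq] at h
      obtain ⟨h1, h2⟩ := h
      have h3 : ∀ b, b ≠ z → t b = t' b := by
        intro b hb
        have := congrFun h2 b
        simpa [if_neg hb] using this
      funext b
      by_cases hb : b = z
      · have e1 := Finset.add_sum_erase Finset.univ t (Finset.mem_univ b)
        have e2 := Finset.add_sum_erase Finset.univ t' (Finset.mem_univ b)
        have e3 : ∑ c ∈ Finset.univ.erase b, t c = ∑ c ∈ Finset.univ.erase b, t' c := by
          apply Finset.sum_congr rfl
          intro c hc
          exact h3 c (by rw [hb] at hc; exact (Finset.mem_erase.mp hc).1)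
        omega
      · exact h3 b hb
    set g : ℕ × (Fin k → ℕ) → ℝ≥0∞ := fun q =>
      (if (∀ b, q.2 b ∈ (if b = z then ({1} : Finset ℕ) else Finset.Icc 1 q.1))
        then (1:ℝ≥0∞) else 0) * y ^ (q.1:ℝ) with hg
    have hmaj : ∀ t : Fin k → ℕ,
        (if (∀ b, 1 ≤ t b) then x ^ (∑ b, (t b:ℝ) * δ b) else 0) ≤ g (i t) := by
      intro t
      split
      · rename_i hpos
        rw [hi, hg]
        simp only
        rw [if_pos, one_mul]
        · rw [← ENNReal.rpow_mul]
          apply rpow_le_rpow_of_exponent_ge hx1.le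
          push_cast
          calc δ₀ * ∑ b, (t b : ℝ) = ∑ b, (t b:ℝ) * δ₀ := by rw [Finset.mul_sum]; congr 1; funext b; ring
            _ ≤ ∑ b, (t b:ℝ) * δ b := by
                apply Finset.sum_le_sum
                intro b _
                exact mul_le_mul_of_nonneg_left (hδ₀le b) (by positivity)
        · intro b
          by_cases hb : b = z
          · simp [hb]
          · rw [if_neg hb, if_neg hb, Finset.mem_Icc]
            exact ⟨hpos b, Finset.single_le_sum (f := fun b => t b) (fun c _ => Nat.zero_le _) (Finset.mem_univ b)⟩
      · exact zero_le
    refine le_trans (tsum_le_tsum_of_inj' i hinj _ g hmaj) ?_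
    -- compute the majorant sum
    have hbox : ∀ n : ℕ, (∑' u : Fin k → ℕ,
        (if (∀ b, u b ∈ (if b = z then ({1}:Finset ℕ) else Finset.Icc 1 n)) then (1:ℝ≥0∞) else 0))
        = (n:ℝ≥0∞)^(k-1) := by
      intro n
      rw [box_count (fun b => if b = z then ({1}:Finset ℕ) else Finset.Icc 1 n) 1, mul_one]
      have hcard : ∀ b : Fin k, (((if b = z then ({1}:Finset ℕ) else Finset.Icc 1 n)).card : ℝ≥0∞)
          = if b = z then 1 else (n:ℝ≥0∞) := by
        intro b; split <;> simp [Nat.card_Icc]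
      rw [Finset.prod_congr rfl (fun b _ => hcard b)]
      rw [← Finset.mul_prod_erase Finset.univ _ (Finset.mem_univ z), if_pos rfl, one_mul]
      rw [Finset.prod_congr rfl (fun b hb => if_neg (Finset.mem_erase.mp hb).1)]
      rw [Finset.prod_const, Finset.card_erase_of_mem (Finset.mem_univ z), Finset.card_univ,
        Fintype.card_fin]
    calc ∑' q : ℕ × (Fin k → ℕ), g q
        = ∑' (n : ℕ) (u : Fin k → ℕ), g (n, u) := ENNReal.tsum_prod'
      _ = ∑' n : ℕ, (n:ℝ≥0∞)^(k-1) * y ^ (n:ℝ) := by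
          refine tsum_congr fun n => ?_
          rw [hg]
          simp only
          rw [ENNReal.tsum_mul_right, hbox n]
      _ = ∑' n : ℕ, (if (0:ℝ) ≤ (n:ℝ) then (n:ℝ≥0∞)^(k-1) * y ^ (n:ℝ) else 0) :=
          tsum_congr fun n => (if_pos (by positivity)).symm
      _ ≤ K * y ^ (0:ℝ) * ENNReal.ofReal (max 0 1) ^ (k-1) := hK 0
      _ = K := by
          rw [ENNReal.rpow_zero, mul_one]
          norm_num



set_option maxHeartbeats 2000000 in
/-- **Lemma A, part 2.** With `γ_j = γ'_j = 1` for `j ≤ ν` and `1 < γ'_j < γ_j` for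
`j > ν`, for every `α > 0` there are constants `C₁, C₂ > 0` such that for all `l ≥ 2`,
`C₁ · 2^{-αl} l^{ν-1} ≤ Σ_{s ∈ ℕ^d, (s,γ') ≥ l} 2^{-α(s,γ)} ≤ C₂ · 2^{-αl} l^{ν-1}`. -/
theorem statement1 (d : ℕ) (hd : 1 ≤ d) (ν : ℕ) (hν1 : 1 ≤ ν) (hνd : ν ≤ d)
    (γ γ' : Fin d → ℝ)
    (hγhead : ∀ j : Fin d, (j : ℕ) < ν → γ j = 1)
    (hγtail : ∀ j : Fin d, ν ≤ (j : ℕ) → 1 < γ j)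
    (hγ'head : ∀ j : Fin d, (j : ℕ) < ν → γ' j = 1)
    (hγ'tail : ∀ j : Fin d, ν ≤ (j : ℕ) → 1 < γ' j ∧ γ' j < γ j)
    (α : ℝ) (hα : 0 < α) :
    ∃ C₁ C₂ : ℝ, 0 < C₁ ∧ 0 < C₂ ∧ ∀ l : ℕ, 2 ≤ l →
      C₁ * (2 : ℝ) ^ (-(α * (l : ℝ))) * (l : ℝ) ^ (ν - 1) ≤
        (∑' s : {s : Fin d → ℕ // (∀ j, 1 ≤ s j) ∧ (l : ℝ) ≤ ∑ j, (s j : ℝ) * γ' j},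
          (2 : ℝ) ^ (-(α * ∑ j, (s.1 j : ℝ) * γ j))) ∧
      (∑' s : {s : Fin d → ℕ // (∀ j, 1 ≤ s j) ∧ (l : ℝ) ≤ ∑ j, (s j : ℝ) * γ' j},
          (2 : ℝ) ^ (-(α * ∑ j, (s.1 j : ℝ) * γ j))) ≤
        C₂ * (2 : ℝ) ^ (-(α * (l : ℝ))) * (l : ℝ) ^ (ν - 1) := by
  classical
  set k := d - ν with hkdef
  have hkd : ν + k = d := by omega
  -- index embeddings
  have hembT : Function.Injective (fun b : Fin k => (⟨ν + (b:ℕ), by have := b.isLt; omega⟩ : Fin d)) := by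
    intro a b h
    have := congrArg Fin.val h
    simp only at this
    exact Fin.ext (by omega)
  have hembM : Function.Injective (fun a : Fin (ν-1) => (⟨(a:ℕ) + 1, by have := a.isLt; omega⟩ : Fin d)) := by
    intro a b h
    have := congrArg Fin.val h
    simp only at this
    exact Fin.ext (by omega)
  set embT : Fin k ↪ Fin d := ⟨fun b => ⟨ν + (b:ℕ), by have := b.isLt; omega⟩, hembT⟩ with hembTdef
  set embM : Fin (ν-1) ↪ Fin d := ⟨fun a => ⟨(a:ℕ) + 1, by have := a.isLt; omega⟩, hembM⟩ with hembMdef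
  set z0 : Fin d := ⟨0, by omega⟩ with hz0
  -- finset decompositions
  set headF : Finset (Fin d) := Finset.univ.filter (fun j => (j:ℕ) < ν) with hheadF
  have hheadmem : ∀ j : Fin d, j ∈ headF ↔ (j:ℕ) < ν := by
    intro j; rw [hheadF, Finset.mem_filter]; simp
  have htailF : Finset.univ.filter (fun j : Fin d => ¬ (j:ℕ) < ν) = Finset.univ.map embT := by
    ext j
    simp only [Finset.mem_filter, Finset.mem_univ, true_and, Finset.mem_map, hembTdef,
      Function.Embedding.coeFn_mk]
    constructor
    · intro hj
      exact ⟨⟨(j:ℕ) - ν, by have := j.isLt; omega⟩, Fin.ext (by simp; omega)⟩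
    · rintro ⟨b, rfl⟩
      simp
  have hheadsplit : headF = insert z0 (Finset.univ.map embM) := by
    ext j
    simp only [hheadmem, Finset.mem_insert, Finset.mem_map, hembMdef, hz0,
      Function.Embedding.coeFn_mk, Finset.mem_univ, true_and]
    constructor
    · intro hj
      rcases Nat.eq_zero_or_pos (j:ℕ) with h0 | h0
      · exact Or.inl (Fin.ext h0)
      · exact Or.inr ⟨⟨(j:ℕ) - 1, by omega⟩, Fin.ext (by simp; omega)⟩
    · rintro (rfl | ⟨a, rfl⟩)
      · simpa using (show 0 < ν by omega)
      · have := a.isLt; simp; omega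
  have hz0nmem : z0 ∉ Finset.univ.map embM := by
    simp only [Finset.mem_map, hembMdef, hz0, Function.Embedding.coeFn_mk, Finset.mem_univ, true_and]
    rintro ⟨a, ha⟩
    have := congrArg Fin.val ha
    simp at this
  -- generic sum splitting
  have hsplit : ∀ (f : Fin d → ℝ), ∑ j, f j =
      (f z0 + ∑ a : Fin (ν-1), f (embM a)) + ∑ b : Fin k, f (embT b) := by
    intro f
    rw [← Finset.sum_filter_add_sum_filter_not Finset.univ (fun j : Fin d => (j:ℕ) < ν) f]
    congr 1
    · rw [← hheadF, hheadsplit, Finset.sum_insert hz0nmem, Finset.sum_map]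
    · rw [htailF, Finset.sum_map]
  have hsplitN : ∀ (f : Fin d → ℕ), ∑ j, f j =
      (f z0 + ∑ a : Fin (ν-1), f (embM a)) + ∑ b : Fin k, f (embT b) := by
    intro f
    rw [← Finset.sum_filter_add_sum_filter_not Finset.univ (fun j : Fin d => (j:ℕ) < ν) f]
    congr 1
    · rw [← hheadF, hheadsplit, Finset.sum_insert hz0nmem, Finset.sum_map]
    · rw [htailF, Finset.sum_map]
  -- the ENNReal exponential
  set A : ℝ → ℝ≥0∞ := fun r => (2:ℝ≥0∞) ^ (-(α * r)) with hA
  have hAne_top : ∀ r, A r ≠ ⊤ := fun r => two_rpow_ne_top _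
  have hAne0 : ∀ r, A r ≠ 0 := fun r => two_rpow_ne_zero _
  have hA_add : ∀ r r' : ℝ, A (r + r') = A r * A r' := by
    intro r r'
    rw [hA]
    simp only
    rw [← ENNReal.rpow_add _ _ (by norm_num) (by norm_num)]
    ring_nf
  have hA_mono : ∀ {r r' : ℝ}, r ≤ r' → A r' ≤ A r := by
    intro r r' h
    exact ENNReal.rpow_le_rpow_of_exponent_le (by norm_num) (by nlinarith)
  set x : ℝ≥0∞ := A 1 with hx
  have hxA : ∀ r : ℝ, x ^ r = A r := by
    intro r
    rw [hx, hA]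
    simp only
    rw [← ENNReal.rpow_mul]
    ring_nf
  have hx0 : x ≠ 0 := hAne0 1
  have hx1 : x < 1 := by
    rw [hx, hA]
    simp only
    apply ENNReal.rpow_lt_one_of_one_lt_of_neg (by norm_num)
    nlinarith
  -- constants
  obtain ⟨K₀, hK₀top, hK₀⟩ := lemU (ν-1) x hx0 hx1
  obtain ⟨K₂, hK₂top, hK₂⟩ := tailLem k (fun b => γ (embT b) - γ' (embT b))
    (fun b => by
      have h := hγ'tail (embT b) (by simp [hembTdef])
      linarith [h.2]) x hx0 hx1
  set G : ℝ := ∑ b : Fin k, γ (embT b) with hG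
  set G' : ℝ := ∑ b : Fin k, γ' (embT b) with hG'
  have hGpos : 0 ≤ G := Finset.sum_nonneg fun b _ => by
    have := hγtail (embT b) (by simp [hembTdef]); linarith
  have hG'pos : 0 ≤ G' := Finset.sum_nonneg fun b _ => by
    have := (hγ'tail (embT b) (by simp [hembTdef])).1; linarith
  set C₁ : ℝ := (2:ℝ) ^ (-(α * ((ν:ℝ) - 1 + G))) * (1 / (ν:ℝ)^(ν-1)) with hC₁
  set C₂ : ℝ := (K₀ * K₂).toReal + 1 with hC₂
  have hC₁pos : 0 < C₁ := by
    rw [hC₁]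
    have h1 : (0:ℝ) < (2:ℝ) ^ (-(α * ((ν:ℝ) - 1 + G))) := Real.rpow_pos_of_pos (by norm_num) _
    have h2 : (0:ℝ) < (ν:ℝ)^(ν-1) := by positivity
    positivity
  have hC₂pos : 0 < C₂ := by
    rw [hC₂]
    positivity
  refine ⟨C₁, C₂, hC₁pos, hC₂pos, ?_⟩
  intro l hl
  -- the ENNReal-valued summand
  set Φ : (Fin d → ℕ) → ℝ≥0∞ := fun s =>
    if (∀ j, 1 ≤ s j) ∧ ((l:ℝ) ≤ ∑ j, (s j : ℝ) * γ' j)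
    then A (∑ j, (s j : ℝ) * γ j) else 0 with hΦ
  set S : ℝ≥0∞ := ∑' s : Fin d → ℕ, Φ s with hS
  -- bridge
  have hbridge : (∑' s : {s : Fin d → ℕ // (∀ j, 1 ≤ s j) ∧ (l : ℝ) ≤ ∑ j, (s j : ℝ) * γ' j},
      (2 : ℝ) ^ (-(α * ∑ j, (s.1 j : ℝ) * γ j))) = S.toReal := by
    have h1 : ∀ s : {s : Fin d → ℕ // (∀ j, 1 ≤ s j) ∧ (l : ℝ) ≤ ∑ j, (s j : ℝ) * γ' j},
        (2 : ℝ) ^ (-(α * ∑ j, (s.1 j : ℝ) * γ j)) = (A (∑ j, (s.1 j : ℝ) * γ j)).toReal := by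
      intro s
      rw [hA]
      simp only
      rw [← ENNReal.toReal_rpow, ENNReal.toReal_ofNat]
    rw [tsum_congr h1, ← ENNReal.tsum_toReal_eq (fun _ => hAne_top _)]
    congr 1
    rw [hS]
    refine Eq.trans (tsum_subtype {s : Fin d → ℕ | (∀ j, 1 ≤ s j) ∧ (l : ℝ) ≤ ∑ j, (s j : ℝ) * γ' j}
      (fun s => A (∑ j, (s j : ℝ) * γ j))) ?_
    apply tsum_congr
    intro s
    rw [Set.indicator_apply, hΦ]
    simp only [Set.mem_setOf_eq]
  -- upper bound (ENNReal)
  have hheadsum : ∀ s : Fin d → ℕ, ∑ j ∈ headF, s j = s z0 + ∑ a : Fin (ν-1), s (embM a) := by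
    intro s
    rw [hheadsplit, Finset.sum_insert hz0nmem, Finset.sum_map]
  have hsumsplit : ∀ (s : Fin d → ℕ) (c : Fin d → ℝ), (∀ j : Fin d, (j:ℕ) < ν → c j = 1) →
      ∑ j, (s j:ℝ) * c j = ((∑ j ∈ headF, s j : ℕ):ℝ) + ∑ b : Fin k, (s (embT b):ℝ) * c (embT b) := by
    intro s c hc
    have h0 : c z0 = 1 := hc z0 (by simp [hz0]; omega)
    have ha : ∀ a : Fin (ν-1), c (embM a) = 1 := fun a => hc _ (by
      simp [hembMdef]; have := a.isLt; omega)
    have e1 : ∑ a : Fin (ν-1), (s (embM a):ℝ) * c (embM a) = ∑ a : Fin (ν-1), (s (embM a):ℝ) :=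
      Finset.sum_congr rfl fun a _ => by rw [ha a, mul_one]
    rw [hsplit (fun j => (s j:ℝ) * c j)]
    rw [e1, h0, mul_one, hheadsum]
    push_cast
    ring
  have hupper : S ≤ (K₀ * K₂) * (A (l:ℝ) * ((l:ℝ≥0∞)) ^ (ν-1)) := by
    set R : (Fin k → ℕ) → ℝ := fun t => ∑ b, (t b : ℝ) * γ' (embT b) with hR
    set Q : (Fin k → ℕ) → ℝ := fun t => ∑ b, (t b : ℝ) * γ (embT b) with hQd
    set D : (Fin k → ℕ) → ℝ := fun t => ∑ b, (t b : ℝ) * (γ (embT b) - γ' (embT b)) with hD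
    have hQRD : ∀ t, Q t = R t + D t := by
      intro t
      rw [hQd, hR, hD]
      simp only
      rw [← Finset.sum_add_distrib]
      apply Finset.sum_congr rfl
      intro b _
      ring
    have hRpos : ∀ t, 0 ≤ R t := by
      intro t
      apply Finset.sum_nonneg
      intro b _
      have := (hγ'tail (embT b) (by simp [hembTdef])).1
      positivity
    set i : (Fin d → ℕ) → (Fin k → ℕ) × ℕ × (Fin (ν-1) → ℕ) := fun s =>
      (fun b => s (embT b), ∑ j ∈ headF, s j, fun a => s (embM a)) with hidef
    have hinj : Function.Injective i := by
      intro s s' h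
      rw [hidef] at h
      simp only [Prod.mk.injEq] at h
      obtain ⟨h1, h2, h3⟩ := h
      have ht : ∀ b : Fin k, s (embT b) = s' (embT b) := fun b => congrFun h1 b
      have hm : ∀ a : Fin (ν-1), s (embM a) = s' (embM a) := fun a => congrFun h3 a
      have hzz : s z0 = s' z0 := by
        have e1 := hheadsum s
        have e2 := hheadsum s'
        have e3 : ∑ a : Fin (ν-1), s (embM a) = ∑ a : Fin (ν-1), s' (embM a) :=
          Finset.sum_congr rfl fun a _ => hm a
        omega
      funext j
      rcases lt_or_ge (j:ℕ) ν with hj | hj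
      · rcases Nat.eq_zero_or_pos (j:ℕ) with h0 | h0
        · have hje : j = z0 := Fin.ext (by simp [hz0, h0])
          rw [hje]; exact hzz
        · have hje : j = embM ⟨(j:ℕ)-1, by omega⟩ := Fin.ext (by simp [hembMdef]; omega)
          rw [hje]; exact hm _
      · have hje : j = embT ⟨(j:ℕ)-ν, by have := j.isLt; omega⟩ := Fin.ext (by
          simp [hembTdef]; omega)
        rw [hje]; exact ht _
    set g : (Fin k → ℕ) × ℕ × (Fin (ν-1) → ℕ) → ℝ≥0∞ := fun w =>
      (if (∀ a, w.2.2 a ∈ Finset.Icc 1 w.2.1) then (1:ℝ≥0∞) else 0) *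
      (if (∀ b, 1 ≤ w.1 b) ∧ ((l:ℝ) ≤ (w.2.1:ℝ) + R w.1) then A ((w.2.1:ℝ) + Q w.1) else 0) with hg
    have hmaj : ∀ s, Φ s ≤ g (i s) := by
      intro s
      rw [hΦ]
      simp only
      split
      · rename_i hcond
        obtain ⟨hpos, hsum⟩ := hcond
        rw [hidef, hg]
        simp only
        rw [if_pos, if_pos]
        · rw [hsumsplit s γ hγhead]
          exact le_of_eq (by rw [one_mul])
        · constructor
          · intro b; exact hpos _
          · rw [hsumsplit s γ' hγ'head] at hsum
            exact hsum
        · intro a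
          rw [Finset.mem_Icc]
          refine ⟨hpos _, ?_⟩
          apply Finset.single_le_sum (f := fun j => s j) (fun j _ => Nat.zero_le _)
          rw [hheadmem]
          simp [hembMdef]
          have := a.isLt; omega
      · exact zero_le
    have step1 : S ≤ ∑' w, g w := by
      rw [hS]
      exact tsum_le_tsum_of_inj' i hinj Φ g hmaj
    have hgsum : ∑' w, g w = ∑' (t : Fin k → ℕ) (m : ℕ),
        ((m:ℝ≥0∞)^(ν-1) * (if (∀ b, 1 ≤ t b) ∧ ((l:ℝ) ≤ (m:ℝ) + R t) then A ((m:ℝ) + Q t) else 0)) := by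
      rw [ENNReal.tsum_prod']
      apply tsum_congr; intro t
      rw [ENNReal.tsum_prod']
      apply tsum_congr; intro m
      rw [hg]
      simp only
      rw [ENNReal.tsum_mul_right]
      congr 1
      rw [box_count (fun _ => Finset.Icc 1 m) 1, mul_one]
      simp [Nat.card_Icc]
    have hl1 : (1:ℝ) ≤ (l:ℝ) := by
      have : (2:ℝ) ≤ (l:ℝ) := by exact_mod_cast hl
      linarith
    have hper : ∀ t : Fin k → ℕ,
        (∑' m : ℕ, (m:ℝ≥0∞)^(ν-1) * (if (∀ b, 1 ≤ t b) ∧ ((l:ℝ) ≤ (m:ℝ) + R t) then A ((m:ℝ) + Q t) else 0))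
        ≤ (K₀ * A (l:ℝ) * (l:ℝ≥0∞)^(ν-1)) * (if (∀ b, 1 ≤ t b) then x ^ (D t) else 0) := by
      intro t
      by_cases hpt : ∀ b, 1 ≤ t b
      · have e : ∀ m : ℕ, (m:ℝ≥0∞)^(ν-1) * (if (∀ b, 1 ≤ t b) ∧ ((l:ℝ) ≤ (m:ℝ) + R t) then A ((m:ℝ) + Q t) else 0)
            = (if (l:ℝ) - R t ≤ (m:ℝ) then (m:ℝ≥0∞)^(ν-1) * x ^ (m:ℝ) else 0) * A (Q t) := by
          intro m
          by_cases hm : (l:ℝ) ≤ (m:ℝ) + R t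
          · rw [if_pos ⟨hpt, hm⟩, if_pos (by linarith), hA_add, hxA]
            ring
          · rw [if_neg (by tauto), if_neg (by intro h; exact hm (by linarith)), zero_mul, mul_zero]
        rw [tsum_congr e, ENNReal.tsum_mul_right]
        have h1 := hK₀ ((l:ℝ) - R t)
        have h2 : ENNReal.ofReal (max ((l:ℝ) - R t) 1) ≤ (l:ℝ≥0∞) := by
          rw [← ENNReal.ofReal_natCast l]
          apply ENNReal.ofReal_le_ofReal
          have := hRpos t
          apply max_le <;> linarith
        have key : A ((l:ℝ) - R t) * A (Q t) = A (l:ℝ) * A (D t) := by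
          rw [← hA_add, ← hA_add]
          congr 1
          rw [hQRD t]
          ring
        calc (∑' m : ℕ, if (l:ℝ) - R t ≤ (m:ℝ) then (m:ℝ≥0∞)^(ν-1) * x ^ (m:ℝ) else 0) * A (Q t)
            ≤ (K₀ * x ^ ((l:ℝ) - R t) * ENNReal.ofReal (max ((l:ℝ) - R t) 1) ^ (ν-1)) * A (Q t) :=
              mul_le_mul_left h1 _
          _ ≤ (K₀ * x ^ ((l:ℝ) - R t) * (l:ℝ≥0∞) ^ (ν-1)) * A (Q t) := by
              gcongr
          _ = (K₀ * (l:ℝ≥0∞)^(ν-1)) * (A ((l:ℝ) - R t) * A (Q t)) := by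
              rw [hxA]; ring
          _ = (K₀ * (l:ℝ≥0∞)^(ν-1)) * (A (l:ℝ) * A (D t)) := by rw [key]
          _ = (K₀ * A (l:ℝ) * (l:ℝ≥0∞)^(ν-1)) * (if (∀ b, 1 ≤ t b) then x ^ (D t) else 0) := by
              rw [if_pos hpt, hxA]; ring
      · rw [if_neg hpt, mul_zero]
        have e0 : ∀ m : ℕ, (m:ℝ≥0∞)^(ν-1) * (if (∀ b, 1 ≤ t b) ∧ ((l:ℝ) ≤ (m:ℝ) + R t) then A ((m:ℝ) + Q t) else 0) = 0 := by
          intro m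
          rw [if_neg (by tauto), mul_zero]
        rw [tsum_congr e0, tsum_zero]
    have hK₂' : ∑' t : Fin k → ℕ, (if (∀ b, 1 ≤ t b) then x ^ (D t) else 0) ≤ K₂ := by
      refine le_trans (le_of_eq (tsum_congr fun t => ?_)) hK₂
      rw [hD]
    calc S ≤ ∑' w, g w := step1
      _ = _ := hgsum
      _ ≤ ∑' t : Fin k → ℕ, (K₀ * A (l:ℝ) * (l:ℝ≥0∞)^(ν-1)) * (if (∀ b, 1 ≤ t b) then x ^ (D t) else 0) :=
          ENNReal.tsum_le_tsum hper
      _ = (K₀ * A (l:ℝ) * (l:ℝ≥0∞)^(ν-1)) * ∑' t : Fin k → ℕ, (if (∀ b, 1 ≤ t b) then x ^ (D t) else 0) :=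
          ENNReal.tsum_mul_left
      _ ≤ (K₀ * A (l:ℝ) * (l:ℝ≥0∞)^(ν-1)) * K₂ := mul_le_mul_right hK₂' _
      _ = (K₀ * K₂) * (A (l:ℝ) * ((l:ℝ≥0∞)) ^ (ν-1)) := by ring
  -- lower bound (ENNReal)
  have hlower : ENNReal.ofReal C₁ * (A (l:ℝ) * ((l:ℝ≥0∞)) ^ (ν-1)) ≤ S := by
    set q : ℕ := (l-1)/ν + 1 with hq
    have hq1 : 1 ≤ q := Nat.le_add_left 1 _
    have hdm := Nat.div_add_mod (l-1) ν
    have hmlt : (l-1) % ν < ν := Nat.mod_lt _ (by omega)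
    have hlq : l ≤ ν * q := by
      have e : ν * q = ν * ((l-1)/ν) + ν := by rw [hq, Nat.mul_add, mul_one]
      obtain ⟨M, hM⟩ : ∃ M, M = ν * ((l-1)/ν) := ⟨_, rfl⟩
      rw [e, ← hM]
      rw [← hM] at hdm
      omega
    have hWq : (ν-1) * (q-1) ≤ l - 1 := by
      have h3 : (ν-1) * (q-1) ≤ ν * (q-1) := Nat.mul_le_mul_right _ (by omega)
      have h4 : ν * (q-1) ≤ l - 1 := by
        have : q - 1 = (l-1)/ν := by omega
        rw [this]
        exact Nat.mul_div_le _ _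
      exact le_trans h3 h4
    set midF : Finset (Fin d) := Finset.univ.filter (fun j => 0 < (j:ℕ) ∧ (j:ℕ) < ν) with hmidF
    have hmidmap : midF = Finset.univ.map embM := by
      ext j
      simp only [hmidF, Finset.mem_filter, Finset.mem_univ, true_and, Finset.mem_map,
        hembMdef, Function.Embedding.coeFn_mk]
      constructor
      · rintro ⟨h0, hν'⟩
        exact ⟨⟨(j:ℕ)-1, by omega⟩, Fin.ext (by simp; omega)⟩
      · rintro ⟨a, rfl⟩
        have := a.isLt
        simp
        omega
    have hmidcard : midF.card = ν - 1 := by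
      rw [hmidmap, Finset.card_map, Finset.card_univ, Fintype.card_fin]
    set S₀ : Fin d → Finset ℕ := fun j => if 0 < (j:ℕ) ∧ (j:ℕ) < ν then Finset.Icc 1 q else {1} with hS₀
    set B : Finset (Fin d → ℕ) := Fintype.piFinset S₀ with hB
    set W : (Fin d → ℕ) → ℕ := fun v => ∑ j ∈ midF, (v j - 1) with hW
    set ψ : (Fin d → ℕ) → (Fin d → ℕ) := fun v j => if (j:ℕ) = 0 then l - W v else v j with hψ
    have hmemB : ∀ v ∈ B, v z0 = 1 ∧ (∀ j ∈ midF, v j ∈ Finset.Icc 1 q) ∧ ∀ b : Fin k, v (embT b) = 1 := by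
      intro v hv
      rw [hB, Fintype.mem_piFinset] at hv
      refine ⟨?_, ?_, ?_⟩
      · have h := hv z0
        have e : S₀ z0 = {1} := by simp only [hS₀]; exact if_neg (by simp [hz0])
        rw [e] at h
        simpa using h
      · intro j hj
        have h := hv j
        rw [hmidF, Finset.mem_filter] at hj
        have e : S₀ j = Finset.Icc 1 q := by simp only [hS₀]; exact if_pos hj.2
        rwa [e] at h
      · intro b
        have h := hv (embT b)
        have e : S₀ (embT b) = {1} := by simp only [hS₀]; exact if_neg (by simp [hembTdef])
        rw [e] at h
        simpa using h
    have hWle : ∀ v ∈ B, W v ≤ l - 1 := by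
      intro v hv
      have h1 : W v ≤ midF.card * (q-1) := by
        rw [hW]
        simp only
        calc ∑ j ∈ midF, (v j - 1) ≤ ∑ j ∈ midF, (q-1) := by
              apply Finset.sum_le_sum
              intro j hj
              have := (hmemB v hv).2.1 j hj
              rw [Finset.mem_Icc] at this
              omega
          _ = midF.card * (q-1) := by rw [Finset.sum_const, smul_eq_mul]
      rw [hmidcard] at h1
      omega
    have hinjOn : ∀ v ∈ B, ∀ v' ∈ B, ψ v = ψ v' → v = v' := by
      intro v hv v' hv' h
      funext j
      rcases Nat.eq_zero_or_pos (j:ℕ) with h0 | h0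
      · have hj : j = z0 := Fin.ext (by simp [hz0, h0])
        rw [hj, (hmemB v hv).1, (hmemB v' hv').1]
      · have := congrFun h j
        rw [hψ] at this
        simpa [Nat.pos_iff_ne_zero.mp h0] using this
    have hψz : ∀ v, ψ v z0 = l - W v := by
      intro v
      rw [hψ]
      simp [hz0]
    have hψpos : ∀ v (j : Fin d), 0 < (j:ℕ) → ψ v j = v j := by
      intro v j hj
      rw [hψ]
      simp [Nat.pos_iff_ne_zero.mp hj]
    have hval : ∀ v ∈ B, Φ (ψ v) = A ((l:ℝ) + (((ν:ℝ) - 1) + G)) := by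
      intro v hv
      obtain ⟨hvz, hvmid, hvtail⟩ := hmemB v hv
      have hWv := hWle v hv
      have hpos : ∀ j, 1 ≤ ψ v j := by
        intro j
        rcases Nat.eq_zero_or_pos (j:ℕ) with h0 | h0
        · have hj : j = z0 := Fin.ext (by simp [hz0, h0])
          rw [hj, hψz]
          omega
        · rw [hψpos v j h0]
          rcases lt_or_ge (j:ℕ) ν with hlt | hge
          · have : v j ∈ Finset.Icc 1 q := hvmid j (by rw [hmidF, Finset.mem_filter]; exact ⟨Finset.mem_univ _, h0, hlt⟩)
            exact (Finset.mem_Icc.mp this).1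
          · have hje : j = embT ⟨(j:ℕ)-ν, by have := j.isLt; omega⟩ := Fin.ext (by simp [hembTdef]; omega)
            rw [hje, hvtail]
      have hcomp : ∀ c : Fin d → ℝ, (∀ j : Fin d, (j:ℕ) < ν → c j = 1) →
          ∑ j, (ψ v j : ℝ) * c j = (l:ℝ) + (((ν:ℝ) - 1) + ∑ b : Fin k, c (embT b)) := by
        intro c hc
        have h0 : c z0 = 1 := hc z0 (by simp [hz0]; omega)
        have e0 : (ψ v z0 : ℝ) = (l:ℝ) - (W v:ℝ) := by
          rw [hψz]
          push_cast [Nat.cast_sub (by omega : W v ≤ l)]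
          ring
        have emid : ∑ a : Fin (ν-1), (ψ v (embM a):ℝ) * c (embM a) = (W v : ℝ) + ((ν:ℝ) - 1) := by
          have e1 : ∀ a : Fin (ν-1), (ψ v (embM a):ℝ) * c (embM a) = (v (embM a):ℝ) := by
            intro a
            rw [hc (embM a) (by simp [hembMdef]; have := a.isLt; omega), mul_one,
              hψpos v _ (by simp [hembMdef])]
          rw [Finset.sum_congr rfl (fun a _ => e1 a)]
          have e2 : ∑ a : Fin (ν-1), v (embM a) = W v + (ν-1) := by
            rw [hW]
            simp only
            rw [hmidmap, Finset.sum_map]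
            have e3 : ∀ a : Fin (ν-1), v (embM a) = (v (embM a) - 1) + 1 := by
              intro a
              have hmem : v (embM a) ∈ Finset.Icc 1 q := hvmid _ (by
                rw [hmidmap]
                exact Finset.mem_map_of_mem _ (Finset.mem_univ a))
              have := (Finset.mem_Icc.mp hmem).1
              omega
            rw [Finset.sum_congr rfl (fun a _ => e3 a), Finset.sum_add_distrib]
            simp [Finset.card_univ]
          have e4 : ((∑ a : Fin (ν-1), v (embM a) : ℕ) : ℝ) = (W v : ℝ) + ((ν:ℝ) - 1) := by
            rw [e2]
            push_cast [Nat.cast_sub hν1]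
            ring
          rw [← e4]
          push_cast
          rfl
        have etail : ∑ b : Fin k, (ψ v (embT b):ℝ) * c (embT b) = ∑ b : Fin k, c (embT b) := by
          apply Finset.sum_congr rfl
          intro b _
          rw [hψpos v _ (by simp [hembTdef]; omega), hvtail b]
          push_cast
          ring
        rw [hsplit (fun j => (ψ v j:ℝ) * c j)]
        rw [e0, h0, mul_one, emid, etail]
        ring
      rw [hΦ]
      simp only
      rw [if_pos, hcomp γ hγhead]
      constructor
      · exact hpos
      · rw [hcomp γ' hγ'head]
        have hν1' : (1:ℝ) ≤ (ν:ℝ) := by exact_mod_cast hν1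
        linarith [hG'pos]
    have hcount : (B.card : ℝ≥0∞) = (q:ℝ≥0∞)^(ν-1) := by
      rw [hB, Fintype.card_piFinset]
      have hc : ∀ j : Fin d, ((S₀ j).card) = if 0 < (j:ℕ) ∧ (j:ℕ) < ν then q else 1 := by
        intro j
        simp only [hS₀]
        split_ifs <;> simp [Nat.card_Icc]
      rw [Finset.prod_congr rfl (fun j _ => hc j)]
      rw [← Finset.prod_filter_mul_prod_filter_not Finset.univ (fun j : Fin d => 0 < (j:ℕ) ∧ (j:ℕ) < ν)]
      rw [Finset.prod_congr rfl (fun j hj => if_pos (Finset.mem_filter.mp hj).2),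
        Finset.prod_congr (rfl : Finset.univ.filter (fun j : Fin d => ¬(0 < (j:ℕ) ∧ (j:ℕ) < ν)) = _) (fun j hj => if_neg (Finset.mem_filter.mp hj).2)]
      rw [Finset.prod_const, Finset.prod_const, one_pow, mul_one, ← hmidF, hmidcard]
      push_cast
      ring
    have hsumB : ∑ s ∈ B.image ψ, Φ s = (q:ℝ≥0∞)^(ν-1) * A ((l:ℝ) + (((ν:ℝ) - 1) + G)) := by
      rw [Finset.sum_image hinjOn]
      rw [Finset.sum_congr rfl (fun v hv => hval v hv), Finset.sum_const, nsmul_eq_mul, hcount]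
    have hkey : ENNReal.ofReal (1/(ν:ℝ)^(ν-1)) * (l:ℝ≥0∞)^(ν-1) ≤ (q:ℝ≥0∞)^(ν-1) := by
      have h1 : ((l:ℝ≥0∞))^(ν-1) ≤ ((ν:ℝ≥0∞) * (q:ℝ≥0∞))^(ν-1) := by
        apply pow_le_pow_left'
        rw [← Nat.cast_mul]
        exact_mod_cast hlq
      have h2 : ENNReal.ofReal (1/(ν:ℝ)^(ν-1)) = ((ν:ℝ≥0∞)^(ν-1))⁻¹ := by
        rw [one_div, ENNReal.ofReal_inv_of_pos (by positivity), ENNReal.ofReal_pow (by positivity),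
          ENNReal.ofReal_natCast]
      rw [h2]
      calc ((ν:ℝ≥0∞)^(ν-1))⁻¹ * (l:ℝ≥0∞)^(ν-1)
          ≤ ((ν:ℝ≥0∞)^(ν-1))⁻¹ * ((ν:ℝ≥0∞)^(ν-1) * (q:ℝ≥0∞)^(ν-1)) := by
            rw [← mul_pow]
            exact mul_le_mul_right h1 _
        _ = (q:ℝ≥0∞)^(ν-1) := by
            rw [← mul_assoc, ENNReal.inv_mul_cancel (by
                apply pow_ne_zero
                exact_mod_cast Nat.pos_iff_ne_zero.mp (by omega)) (by
                apply ENNReal.pow_ne_top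
                exact ENNReal.natCast_ne_top _), one_mul]
    have hofC₁ : ENNReal.ofReal C₁ = A (((ν:ℝ)-1) + G) * ENNReal.ofReal (1/(ν:ℝ)^(ν-1)) := by
      rw [hC₁, ENNReal.ofReal_mul (Real.rpow_pos_of_pos (by norm_num) _).le]
      congr 1
      rw [hA]
      simp only
      rw [← ENNReal.ofReal_rpow_of_pos (by norm_num : (0:ℝ) < 2)]
      norm_num
    calc ENNReal.ofReal C₁ * (A (l:ℝ) * ((l:ℝ≥0∞)) ^ (ν-1))
        = (A (((ν:ℝ)-1) + G) * A (l:ℝ)) * (ENNReal.ofReal (1/(ν:ℝ)^(ν-1)) * (l:ℝ≥0∞)^(ν-1)) := by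
          rw [hofC₁]; ring
      _ ≤ (A (((ν:ℝ)-1) + G) * A (l:ℝ)) * (q:ℝ≥0∞)^(ν-1) := mul_le_mul_right hkey _
      _ = (q:ℝ≥0∞)^(ν-1) * A ((l:ℝ) + (((ν:ℝ) - 1) + G)) := by
          rw [hA_add (l:ℝ) (((ν:ℝ) - 1) + G)]; ring
      _ = ∑ s ∈ B.image ψ, Φ s := hsumB.symm
      _ ≤ S := by
          rw [hS]
          exact ENNReal.sum_le_tsum _
  -- conversions
  have hfin : (K₀ * K₂) * (A (l:ℝ) * ((l:ℝ≥0∞)) ^ (ν-1)) ≠ ⊤ :=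
    ENNReal.mul_ne_top (ENNReal.mul_ne_top hK₀top hK₂top)
      (ENNReal.mul_ne_top (hAne_top _) (by simp [ENNReal.pow_ne_top, ENNReal.natCast_ne_top]))
  have hSfin : S ≠ ⊤ := fun h => hfin (eq_top_iff.mpr (h ▸ hupper))
  have htoReal : (A (l:ℝ) * ((l:ℝ≥0∞)) ^ (ν-1)).toReal
      = (2:ℝ) ^ (-(α * (l:ℝ))) * (l:ℝ) ^ (ν-1) := by
    rw [ENNReal.toReal_mul, hA]
    simp only
    rw [← ENNReal.toReal_rpow, ENNReal.toReal_pow, ENNReal.toReal_natCast, ENNReal.toReal_ofNat]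
  constructor
  · -- lower
    rw [hbridge]
    calc C₁ * (2:ℝ) ^ (-(α * (l:ℝ))) * (l:ℝ) ^ (ν-1)
        = (ENNReal.ofReal C₁ * (A (l:ℝ) * ((l:ℝ≥0∞)) ^ (ν-1))).toReal := by
          rw [ENNReal.toReal_mul, ENNReal.toReal_ofReal hC₁pos.le, htoReal, mul_assoc]
      _ ≤ S.toReal := ENNReal.toReal_mono hSfin hlower
  · -- upper
    rw [hbridge]
    calc S.toReal ≤ ((K₀ * K₂) * (A (l:ℝ) * ((l:ℝ≥0∞)) ^ (ν-1))).toReal :=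
          ENNReal.toReal_mono hfin hupper
      _ = (K₀ * K₂).toReal * ((2:ℝ) ^ (-(α * (l:ℝ))) * (l:ℝ) ^ (ν-1)) := by
          rw [ENNReal.toReal_mul, htoReal]
      _ ≤ C₂ * ((2:ℝ) ^ (-(α * (l:ℝ))) * (l:ℝ) ^ (ν-1)) := by
          apply mul_le_mul_of_nonneg_right
          · rw [hC₂]; linarith
          · positivity
      _ = C₂ * (2:ℝ) ^ (-(α * (l:ℝ))) * (l:ℝ) ^ (ν-1) := by ring
end
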